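/- Let (a_k)_{k≥0} be nonnegative reals and suppose for all k ≥ 0, a_k ≤ C(S_k - S_{k+τ}) where (S_k) is nonincreasing, bounded below by s, and C, τ > 0. Then for any K > τ, min_{k ≤ K} a_k ≤ C(τ+1)(S_0 - s)/K. -/

import Mathlib

theorem sublinear_rate (a S : ℕ → ℝ) (C s : ℝ) (τ : ℕ)
    (hC : 0 < C) (hτ : 1 ≤ τ)
    (ha : ∀ k, 0 ≤ a k)
    (hS_mono : ∀ k, S (k + 1) ≤ S k)
    (hS_bdd : ∀ k, s ≤ S k)
    (hbound : ∀ k, a k ≤ C * (S k - S (k + τ))) :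
    ∀ K : ℕ, τ < K →
      ∃ k ≤ K, a k ≤ C * (τ + 1) * (S 0 - s) / K := by
  intro K hK
  have hK0 : 0 < K := lt_of_le_of_lt (Nat.zero_le τ) hK
  have hSanti : Antitone S := antitone_nat_of_succ_le hS_mono
  obtain ⟨k, hkmem, hkmin⟩ := (Finset.range (K + 1)).exists_min_image a (by simp)
  refine ⟨k, Nat.lt_succ_iff.mp (Finset.mem_range.mp hkmem), ?_⟩
  set T : ℕ → ℝ := fun n => ∑ j ∈ Finset.range τ, S (n + j) with hT
  obtain ⟨m, rfl⟩ : ∃ m, τ = m + 1 := ⟨τ - 1, (Nat.succ_pred_eq_of_pos hτ).symm⟩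
  have hstep : ∀ i, S i - S (i + (m + 1)) = T i - T (i + 1) := by
    intro i
    have h1 : T i = S i + ∑ j ∈ Finset.range m, S (i + 1 + j) := by
      show (∑ j ∈ Finset.range (m + 1), S (i + j)) = _
      rw [Finset.sum_range_succ']
      simp [add_comm, add_assoc, add_left_comm]
    have h2 : T (i + 1) = (∑ j ∈ Finset.range m, S (i + 1 + j)) + S (i + (m + 1)) := by
      show (∑ j ∈ Finset.range (m + 1), S (i + 1 + j)) = _
      rw [Finset.sum_range_succ]
      ring_nf
    rw [h1, h2]; ring
  have htel : ∑ i ∈ Finset.range (K + 1), (S i - S (i + (m + 1))) = T 0 - T (K + 1) := by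
    calc ∑ i ∈ Finset.range (K + 1), (S i - S (i + (m + 1)))
        = ∑ i ∈ Finset.range (K + 1), (T i - T (i + 1)) := by
          exact Finset.sum_congr rfl fun i _ => hstep i
      _ = T 0 - T (K + 1) := Finset.sum_range_sub' T (K + 1)
  have hT0 : T 0 ≤ (m + 1 : ℝ) * S 0 := by
    have := Finset.sum_le_sum (f := fun j => S (0 + j)) (g := fun _ => S 0)
      (s := Finset.range (m + 1)) (fun j _ => hSanti (Nat.zero_le _))
    simpa [hT, mul_comm] using this
  have hTK : (m + 1 : ℝ) * s ≤ T (K + 1) := by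
    have := Finset.sum_le_sum (f := fun _ => s) (g := fun j => S (K + 1 + j))
      (s := Finset.range (m + 1)) (fun j _ => hS_bdd _)
    simpa [hT, mul_comm] using this
  have hsum1 : (K + 1 : ℝ) * a k ≤ ∑ i ∈ Finset.range (K + 1), a i := by
    have := Finset.card_nsmul_le_sum (Finset.range (K + 1)) a (a k)
      (fun i hi => hkmin i hi)
    simpa [nsmul_eq_mul] using this
  have hsum2 : ∑ i ∈ Finset.range (K + 1), a i ≤ C * ((m + 1 : ℝ) * (S 0 - s)) := by
    calc ∑ i ∈ Finset.range (K + 1), a i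
        ≤ ∑ i ∈ Finset.range (K + 1), C * (S i - S (i + (m + 1))) :=
          Finset.sum_le_sum fun i _ => hbound i
      _ = C * (T 0 - T (K + 1)) := by rw [← Finset.mul_sum, htel]
      _ ≤ C * ((m + 1 : ℝ) * (S 0 - s)) := by
          apply mul_le_mul_of_nonneg_left _ hC.le
          nlinarith
  have hS0s : (0 : ℝ) ≤ S 0 - s := by linarith [hS_bdd 0]
  have hKR : (0 : ℝ) < K := by exact_mod_cast hK0
  have key : a k * K ≤ C * ((m + 1 : ℝ) + 1) * (S 0 - s) := by
    have h1 : a k * K ≤ (K + 1 : ℝ) * a k := by nlinarith [ha k]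
    have h2 : C * ((m + 1 : ℝ)) * (S 0 - s) ≤ C * ((m + 1 : ℝ) + 1) * (S 0 - s) := by
      nlinarith
    nlinarith
  rw [le_div_iff₀ hKR]
  have : ((m : ℝ) + 1 + 1) = (((m + 1 : ℕ) : ℝ) + 1) := by push_cast; ring
  push_cast
  nlinarith
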